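/- Let x : Fin N → ℝ be canonical with N ≥ 3. Removing the inner vertex j attaining the inner minimum yields a sequence x' on Fin (N-1) (skipping index j) which is again canonical, and HVG(x') equals the graph obtained from HVG(x) by deleting vertex j and adding the edge between the images of j-1 and j+1 (which is already present). -/

import Mathlib

/-- The horizontal visibility graph of a sequence `x : Fin N → ℝ`:
`a < b` are adjacent iff `x k < min (x a) (x b)` for all `a < k < b`. -/
def HVG {N : ℕ} (x : Fin N → ℝ) : SimpleGraph (Fin N) where
  Adj a b := (a < b ∧ ∀ k, a < k → k < b → x k < min (x a) (x b)) ∨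
             (b < a ∧ ∀ k, b < k → k < a → x k < min (x b) (x a))
  symm := ⟨by intro a b h; tauto⟩
  loopless := ⟨by intro a h; rcases h with ⟨h, -⟩ | ⟨h, -⟩ <;> exact lt_irrefl a h⟩

/-- Degree of a vertex in the HVG. -/
noncomputable def hvgDegree {N : ℕ} (x : Fin N → ℝ) (v : Fin N) : ℕ :=
  Nat.card {w : Fin N // (HVG x).Adj v w}

/-- The order embedding of `Fin (N-1)` into `Fin N` skipping the index `j`. -/
def skip {N : ℕ} (j : Fin N) (i : Fin (N - 1)) : Fin N :=
  if (i : ℕ) < (j : ℕ) then ⟨(i : ℕ), by have := i.isLt; have := j.isLt; omega⟩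
  else ⟨(i : ℕ) + 1, by have := i.isLt; have := j.isLt; omega⟩

lemma skip_val {N : ℕ} (j : Fin N) (i : Fin (N - 1)) :
    ((skip j i : Fin N) : ℕ) = if (i : ℕ) < (j : ℕ) then (i : ℕ) else (i : ℕ) + 1 := by
  unfold skip; split <;> rfl

theorem hvg_decimate_inner_min {N : ℕ} (hN : 3 ≤ N) (x : Fin N → ℝ)
    (hmax : ∀ k : Fin N, 0 < (k : ℕ) → (k : ℕ) < N - 1 →
      x k < min (x ⟨0, by omega⟩) (x ⟨N - 1, by omega⟩))
    (hinj : ∀ k l : Fin N, 0 < (k : ℕ) → (k : ℕ) < N - 1 →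
      0 < (l : ℕ) → (l : ℕ) < N - 1 → x k = x l → k = l)
    (j : Fin N) (hj0 : 0 < (j : ℕ)) (hjN : (j : ℕ) < N - 1)
    (hjmin : ∀ k : Fin N, 0 < (k : ℕ) → (k : ℕ) < N - 1 → x j ≤ x k) :
    -- the decimated sequence is again canonical
    ((∀ k : Fin (N - 1), 0 < (k : ℕ) → (k : ℕ) < N - 1 - 1 →
        x (skip j k) < min (x (skip j ⟨0, by omega⟩)) (x (skip j ⟨N - 2, by omega⟩))) ∧
      (∀ k l : Fin (N - 1), 0 < (k : ℕ) → (k : ℕ) < N - 1 - 1 →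
        0 < (l : ℕ) → (l : ℕ) < N - 1 - 1 → x (skip j k) = x (skip j l) → k = l)) ∧
    -- the HVG of the decimated sequence is the induced subgraph of the original HVG
    (∀ a b : Fin (N - 1),
      (HVG (fun i => x (skip j i))).Adj a b ↔ (HVG x).Adj (skip j a) (skip j b)) ∧
    -- and the edge between the images of j-1 and j+1 is already present in HVG x
    (HVG x).Adj ⟨(j : ℕ) - 1, by omega⟩ ⟨(j : ℕ) + 1, by omega⟩ := by
  -- basic facts about skip
  have hmono_iff : ∀ a b : Fin (N - 1), skip j a < skip j b ↔ a < b := by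
    intro a b
    rw [Fin.lt_def, Fin.lt_def, skip_val, skip_val]
    split_ifs <;> omega
  have hne : ∀ i : Fin (N - 1), skip j i ≠ j := by
    intro i h
    have := skip_val j i
    rw [h] at this
    split_ifs at this <;> omega
  have hsurj : ∀ k : Fin N, k ≠ j → ∃ m : Fin (N - 1), skip j m = k := by
    intro k hk
    have hkj : (k : ℕ) ≠ (j : ℕ) := fun h => hk (Fin.ext h)
    by_cases h : (k : ℕ) < (j : ℕ)
    · refine ⟨⟨(k : ℕ), by omega⟩, Fin.ext ?_⟩
      rw [skip_val]; simp only; rw [if_pos h]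
    · have hk1 : 1 ≤ (k : ℕ) := by omega
      refine ⟨⟨(k : ℕ) - 1, by have := k.isLt; omega⟩, Fin.ext ?_⟩
      rw [skip_val]; simp only; rw [if_neg (by omega)]; omega
  -- x j is strictly below all other values
  have hjlt : ∀ k : Fin N, k ≠ j → x j < x k := by
    intro k hk
    have hmj := hmax j hj0 hjN
    rcases Nat.eq_zero_or_pos (k : ℕ) with h0 | h0
    · have : k = ⟨0, by omega⟩ := Fin.ext h0
      rw [this]; exact lt_of_lt_of_le hmj (min_le_left _ _)
    · by_cases hN1 : (k : ℕ) = N - 1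
      · have : k = ⟨N - 1, by omega⟩ := Fin.ext hN1
        rw [this]; exact lt_of_lt_of_le hmj (min_le_right _ _)
      · have hkN : (k : ℕ) < N - 1 := by have := k.isLt; omega
        rcases lt_or_eq_of_le (hjmin k h0 hkN) with h | h
        · exact h
        · exact absurd (hinj j k hj0 hjN h0 hkN h) (fun e => hk e.symm)
  -- visibility condition equivalence for a < b
  have key : ∀ a b : Fin (N - 1), a < b →
      ((∀ k : Fin (N - 1), a < k → k < b →
          x (skip j k) < min (x (skip j a)) (x (skip j b))) ↔
       (∀ k : Fin N, skip j a < k → k < skip j b →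
          x k < min (x (skip j a)) (x (skip j b)))) := by
    intro a b hab
    constructor
    · intro h k h1 h2
      by_cases hkj : k = j
      · subst hkj
        exact lt_min (hjlt _ (hne a)) (hjlt _ (hne b))
      · obtain ⟨m, hm⟩ := hsurj k hkj
        subst hm
        exact h m ((hmono_iff a m).mp h1) ((hmono_iff m b).mp h2)
    · intro h k h1 h2
      exact h (skip j k) ((hmono_iff a k).mpr h1) ((hmono_iff k b).mpr h2)
  refine ⟨⟨?_, ?_⟩, ?_, ?_⟩
  · -- canonical: max at endpoints
    intro k hk0 hkN
    have h0 : skip j ⟨0, by omega⟩ = (⟨0, by omega⟩ : Fin N) := by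
      apply Fin.ext; rw [skip_val]; simp only; rw [if_pos (by omega)]
    have hend : skip j ⟨N - 2, by omega⟩ = (⟨N - 1, by omega⟩ : Fin N) := by
      apply Fin.ext; rw [skip_val]; simp only; rw [if_neg (by omega)]; omega
    rw [h0, hend]
    apply hmax
    · rw [skip_val]; split_ifs <;> omega
    · rw [skip_val]; split_ifs <;> omega
  · -- canonical: injectivity on inner values
    intro k l hk0 hkN hl0 hlN hxy
    have hb : ∀ m : Fin (N - 1), 0 < (m : ℕ) → (m : ℕ) < N - 1 - 1 →
        0 < ((skip j m : Fin N) : ℕ) ∧ ((skip j m : Fin N) : ℕ) < N - 1 := by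
      intro m hm0 hmN
      rw [skip_val]; split_ifs <;> omega
    obtain ⟨hk1, hk2⟩ := hb k hk0 hkN
    obtain ⟨hl1, hl2⟩ := hb l hl0 hlN
    have := hinj (skip j k) (skip j l) hk1 hk2 hl1 hl2 hxy
    have hv : ((skip j k : Fin N) : ℕ) = ((skip j l : Fin N) : ℕ) := by rw [this]
    rw [skip_val, skip_val] at hv
    apply Fin.ext
    split_ifs at hv <;> omega
  · -- adjacency equivalence
    intro a b
    constructor
    · rintro (⟨h, hv⟩ | ⟨h, hv⟩)
      · exact Or.inl ⟨(hmono_iff a b).mpr h, (key a b h).mp hv⟩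
      · exact Or.inr ⟨(hmono_iff b a).mpr h, (key b a h).mp hv⟩
    · rintro (⟨h, hv⟩ | ⟨h, hv⟩)
      · have h' := (hmono_iff a b).mp h
        exact Or.inl ⟨h', (key a b h').mpr hv⟩
      · have h' := (hmono_iff b a).mp h
        exact Or.inr ⟨h', (key b a h').mpr hv⟩
  · -- the edge (j-1, j+1)
    left
    constructor
    · rw [Fin.lt_def]; simp only; omega
    · intro k h1 h2
      rw [Fin.lt_def] at h1 h2
      simp only at h1 h2
      have hkj : k = j := Fin.ext (by omega)
      have e1 : (⟨(j : ℕ) - 1, by omega⟩ : Fin N) ≠ j := by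
        intro e
        have : ((⟨(j : ℕ) - 1, by omega⟩ : Fin N) : ℕ) = (j : ℕ) := by rw [e]
        simp only at this; omega
      have e2 : (⟨(j : ℕ) + 1, by omega⟩ : Fin N) ≠ j := by
        intro e
        have : ((⟨(j : ℕ) + 1, by omega⟩ : Fin N) : ℕ) = (j : ℕ) := by rw [e]
        simp only at this; omega
      rw [hkj]
      exact lt_min (hjlt _ e1) (hjlt _ e2)
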